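/- Let n ≥ 3, μ_s(x) = (n−2)x_s + Σ_{j=1}^n x_j, Γ = {x ∈ ℝⁿ : μ_s(x) > 0 for all s}, and F(x) = (∏_{s=1}^n μ_s(x))^{1/n}. Then for every x ∈ Γ one has Σ_{j=1}^n x_j > 0, F is differentiable at x with ∂F/∂x_i (x) = (F(x)/n) · Σ_{s=1}^n (1 + (n−2)δ_{is})/μ_s(x) for each i, and ∂F/∂x_i (x) ≥ (1/n) · F(x)/(Σ_{j=1}^n x_j) for each i; i.e., F satisfies condition (C₅) with ε = 1/n. -/

import Mathlib

/-- For `n ≥ 3`, `μ s x = (n-2)*x s + ∑ j, x j`,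
`Γ = {x : ∀ s, μ s x > 0}` and `F x = (∏ s, μ s x)^(1/n)`: on `Γ` one has
`∑ j, x j > 0`, `F` is differentiable with partial derivatives
`∂F/∂x_i = (F x / n) * ∑ s, (1 + (n-2)δ_{is}) / μ s x`, and
`∂F/∂x_i ≥ (1/n) * F x / (∑ j, x j)`; i.e. `F` satisfies (C₅) with `ε = 1/n`. -/
theorem stmt_3 (n : ℕ) (hn : 3 ≤ n) (x : Fin n → ℝ)
    (hx : ∀ s, 0 < ((n : ℝ) - 2) * x s + ∑ j, x j) :
    let μ : Fin n → (Fin n → ℝ) → ℝ := fun s y => ((n : ℝ) - 2) * y s + ∑ j, y j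
    let F : (Fin n → ℝ) → ℝ := fun y => (∏ s, μ s y) ^ (1 / (n : ℝ))
    0 < ∑ j, x j ∧
    DifferentiableAt ℝ F x ∧
    ∀ i : Fin n,
      fderiv ℝ F x (Pi.single i 1)
          = F x / (n : ℝ) * ∑ s, (1 + ((n : ℝ) - 2) * (if i = s then 1 else 0)) / μ s x ∧
      (1 / (n : ℝ)) * (F x / ∑ j, x j) ≤ fderiv ℝ F x (Pi.single i 1) := by
  intro μ F
  have hn3 : (3:ℝ) ≤ (n:ℝ) := by exact_mod_cast hn
  have hnpos : (0:ℝ) < n := by linarith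
  have hsum_eq : ∑ s, μ s x = (2*(n:ℝ) - 2) * ∑ j, x j := by
    simp only [μ, Finset.sum_add_distrib, ← Finset.mul_sum, Finset.sum_const,
      Finset.card_univ, Fintype.card_fin, nsmul_eq_mul]
    ring
  have hSpos : 0 < ∑ s, μ s x :=
    Finset.sum_pos (fun s _ => hx s) ⟨⟨0, by omega⟩, Finset.mem_univ _⟩
  have hσ : 0 < ∑ j, x j := by nlinarith [hsum_eq ▸ hSpos]
  have hP : 0 < ∏ s, μ s x := Finset.prod_pos fun s _ => hx s
  have hFpos : 0 < F x := Real.rpow_pos_of_pos hP _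
  -- derivative of μ s
  set L : Fin n → (Fin n → ℝ) →L[ℝ] ℝ := fun s =>
    ((n:ℝ) - 2) • ContinuousLinearMap.proj s + ∑ j, ContinuousLinearMap.proj j with hL
  have hμd : ∀ s, HasFDerivAt (μ s) (L s) x := by
    intro s
    have hfun : (μ s : (Fin n → ℝ) → ℝ) = L s := by
      funext y
      simp [hL, ContinuousLinearMap.sum_apply, smul_eq_mul, μ]
    exact hfun ▸ (L s).hasFDerivAt
  have hProd : HasFDerivAt (fun y => ∏ s, μ s y)
      (∑ s, (∏ t ∈ Finset.univ.erase s, μ t x) • L s) x :=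
    HasFDerivAt.finset_prod fun s _ => hμd s
  have hF : HasFDerivAt F ((1 / (n:ℝ) * (∏ s, μ s x) ^ (1/(n:ℝ) - 1)) •
      (∑ s, (∏ t ∈ Finset.univ.erase s, μ t x) • L s)) x :=
    by have h := (Real.hasDerivAt_rpow_const (p := 1/(n:ℝ)) (Or.inl hP.ne')).comp_hasFDerivAt x hProd; exact h
  have hdiff : DifferentiableAt ℝ F x := hF.differentiableAt
  have hfd := hF.fderiv
  refine ⟨hσ, hdiff, fun i => ?_⟩
  have hLval : ∀ s, L s (Pi.single i 1) =
      1 + ((n:ℝ) - 2) * (if i = s then 1 else 0) := by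
    intro s
    simp only [hL, ContinuousLinearMap.add_apply, ContinuousLinearMap.smul_apply,
      ContinuousLinearMap.proj_apply, ContinuousLinearMap.sum_apply, smul_eq_mul,
      Pi.single_apply]
    rw [Finset.sum_ite_eq' Finset.univ i (fun _ => (1:ℝ))]
    simp [eq_comm]
    ring
  have key : fderiv ℝ F x (Pi.single i 1)
      = F x / (n : ℝ) * ∑ s, (1 + ((n : ℝ) - 2) * (if i = s then 1 else 0)) / μ s x := by
    rw [hfd]
    simp only [ContinuousLinearMap.smul_apply, ContinuousLinearMap.sum_apply,
      ContinuousLinearMap.smul_apply, smul_eq_mul, Finset.mul_sum]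
    refine Finset.sum_congr rfl fun s _ => ?_
    rw [hLval s]
    have hμs : μ s x ≠ 0 := (hx s).ne'
    have herase : ∏ t ∈ Finset.univ.erase s, μ t x = (∏ t, μ t x) / μ s x := by
      field_simp
      rw [mul_comm]
      exact (Finset.mul_prod_erase Finset.univ (fun t => μ t x) (Finset.mem_univ s))
    rw [herase]
    have hr : (∏ t, μ t x) ^ (1/(n:ℝ) - 1) = F x / (∏ t, μ t x) := by
      rw [Real.rpow_sub hP, Real.rpow_one]
    rw [hr]
    field_simp
  refine ⟨key, ?_⟩
  rw [key]
  -- suffices : 1 / σ ≤ ∑ s, (1 + (n-2)δ)/μ s x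
  have hbound : ∀ s : Fin n, (1 + ((n:ℝ) - 2) * (if i = s then 1 else 0)) / ((2*(n:ℝ) - 2) * ∑ j, x j)
      ≤ (1 + ((n:ℝ) - 2) * (if i = s then 1 else 0)) / μ s x := by
    intro s
    have hnum : (0:ℝ) ≤ 1 + ((n:ℝ) - 2) * (if i = s then 1 else 0) := by
      split <;> nlinarith
    have hle : μ s x ≤ (2*(n:ℝ) - 2) * ∑ j, x j := by
      rw [← hsum_eq]
      exact Finset.single_le_sum (fun t _ => (hx t).le) (Finset.mem_univ s)
    exact div_le_div_of_nonneg_left hnum (hx s) hle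
  have hsum2 : ∑ s, (1 + ((n:ℝ) - 2) * (if i = s then 1 else 0)) / ((2*(n:ℝ) - 2) * ∑ j, x j)
      = 1 / ∑ j, x j := by
    rw [← Finset.sum_div, Finset.sum_add_distrib, ← Finset.mul_sum,
      Finset.sum_ite_eq Finset.univ i (fun _ => (1:ℝ))]
    simp only [Finset.mem_univ, if_true, Finset.sum_const, Finset.card_univ,
      Fintype.card_fin, nsmul_eq_mul, mul_one]
    rw [div_eq_div_iff (by nlinarith : (0:ℝ) < (2*(n:ℝ) - 2) * ∑ j, x j).ne' hσ.ne']
    ring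
  have hS2 : 1 / (∑ j, x j) ≤ ∑ s, (1 + ((n:ℝ) - 2) * (if i = s then 1 else 0)) / μ s x := by
    rw [← hsum2]
    exact Finset.sum_le_sum fun s _ => hbound s
  calc (1 / (n : ℝ)) * (F x / ∑ j, x j) = F x / n * (1 / ∑ j, x j) := by ring
    _ ≤ F x / n * ∑ s, (1 + ((n:ℝ) - 2) * (if i = s then 1 else 0)) / μ s x :=
        mul_le_mul_of_nonneg_left hS2 (by positivity)
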